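/- For the map 𝔢(u₀, u₁) = (e^{u₀} cos u₁, e^{u₀} sin u₁) on ℂ², one has 𝔢(u₀, u₁) = 𝔢(u₀', u₁') if and only if there exist integers h₁, h₂ with u₀' = u₀ + (h₁ + h₂)𝕚π and u₁' = u₁ + (h₁ − h₂)π. -/

import Mathlib

open Complex

/-- The lift `𝔢` of the exponential to `ℂ²`. -/
noncomputable def frakE (u : ℂ × ℂ) : ℂ × ℂ :=
  (Complex.exp u.1 * Complex.cos u.2, Complex.exp u.1 * Complex.sin u.2)

lemma frakE_eq_iff_exp (u u' : ℂ × ℂ) :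
    frakE u = frakE u' ↔
      (Complex.exp (u.1 + u.2 * Complex.I) = Complex.exp (u'.1 + u'.2 * Complex.I) ∧
       Complex.exp (u.1 - u.2 * Complex.I) = Complex.exp (u'.1 - u'.2 * Complex.I)) := by
  have expand : ∀ v : ℂ × ℂ, frakE v =
      ((Complex.exp (v.1 + v.2 * Complex.I) + Complex.exp (v.1 - v.2 * Complex.I)) / 2,
       (Complex.exp (v.1 - v.2 * Complex.I) - Complex.exp (v.1 + v.2 * Complex.I)) * Complex.I / 2) := by
    intro v
    have h1 : v.1 + v.2 * Complex.I = v.1 + v.2 * Complex.I := rfl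
    simp only [frakE, Complex.cos, Complex.sin, Prod.mk.injEq]
    constructor
    · rw [show v.1 + v.2 * Complex.I = v.1 + v.2 * Complex.I from rfl,
        Complex.exp_add, show v.1 - v.2 * Complex.I = v.1 + -v.2 * Complex.I by ring,
        Complex.exp_add]
      ring
    · rw [show v.1 - v.2 * Complex.I = v.1 + -v.2 * Complex.I by ring,
        Complex.exp_add, Complex.exp_add]
      ring
  rw [expand u, expand u', Prod.mk.injEq]
  constructor
  · rintro ⟨h1, h2⟩
    have hI : (Complex.I : ℂ) ≠ 0 := Complex.I_ne_zero
    constructor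
    · field_simp at h1 h2
      rw [mul_comm Complex.I u'.2] at h1 h2
      linear_combination (h1 - h2) / 2
    · field_simp at h1 h2
      rw [mul_comm Complex.I u'.2] at h1 h2
      linear_combination (h1 + h2) / 2
  · rintro ⟨h1, h2⟩
    rw [h1, h2]
    exact ⟨rfl, rfl⟩

theorem frakE_fibers (u u' : ℂ × ℂ) :
    frakE u = frakE u' ↔ ∃ h₁ h₂ : ℤ,
      u'.1 = u.1 + ((h₁ + h₂ : ℤ) : ℂ) * (Real.pi : ℂ) * Complex.I ∧
      u'.2 = u.2 + ((h₁ - h₂ : ℤ) : ℂ) * (Real.pi : ℂ) := by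
  rw [frakE_eq_iff_exp]
  constructor
  · rintro ⟨e1, e2⟩
    obtain ⟨m, hm⟩ := Complex.exp_eq_exp_iff_exists_int.mp e1
    obtain ⟨n, hn⟩ := Complex.exp_eq_exp_iff_exists_int.mp e2
    refine ⟨-m, -n, ?_, ?_⟩
    · push_cast
      linear_combination (-hm - hn) / 2
    · have : Complex.I * u'.2 = Complex.I * (u.2 + ((-m - -n : ℤ) : ℂ) * (Real.pi : ℂ)) := by
        push_cast
        linear_combination (hn - hm) / 2
      exact mul_left_cancel₀ Complex.I_ne_zero this
  · rintro ⟨h₁, h₂, e1, e2⟩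
    constructor
    · rw [Complex.exp_eq_exp_iff_exists_int]
      refine ⟨-h₁, ?_⟩
      rw [e1, e2]
      push_cast
      ring
    · rw [Complex.exp_eq_exp_iff_exists_int]
      refine ⟨-h₂, ?_⟩
      rw [e1, e2]
      push_cast
      ring
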